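/- Let {F^k} be the pullback attractor of a non-autonomous iterated function system of similarities satisfying the generalised Moran open-set condition, with inf{σ_i : i ∈ ℕ} = σ* > 0, and suppose there exists s > 0 with Σ_{i∈I_k} σ_i^s = 1 for all k ∈ ℕ. Then there exist constants κ₁, κ₂ > 0, independent of k and δ, such that κ₁ δ^{−s} ≤ card(J^k_δ) ≤ κ₂ δ^{−s} for every k ∈ ℕ₀ and every δ with 0 < δ ≤ η. -/

import Mathlib

open Set Metric Filter Bornology MeasureTheory
open scoped ENNReal NNReal

/-- A non-autonomous iterated function system: contractions `f i` with ratios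
`σ i ∈ (0,1)` and finite nonempty index sets `I k ⊆ ℕ` for `k ≥ 1`. -/
structure NAIFS (E : Type*) [MetricSpace E] where
  f : ℕ → E → E
  σ : ℕ → ℝ
  σ_pos : ∀ i, 0 < σ i
  σ_lt_one : ∀ i, σ i < 1
  contract : ∀ i x y, dist (f i x) (f i y) ≤ σ i * dist x y
  I : ℕ → Finset ℕ
  I_nonempty : ∀ k, 1 ≤ k → (I k).Nonempty

variable {E : Type*} [MetricSpace E]

/-- `S^k(B) = ⋃_{i ∈ I_{k+1}} f_i(B)`. -/
def Sstep (sys : NAIFS E) (k : ℕ) (B : Set E) : Set E :=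
  ⋃ i ∈ sys.I (k + 1), sys.f i '' B

/-- `SiterN sys k n B = S^{k, k+n}(B) = S^k ∘ ⋯ ∘ S^{k+n-1} (B)`. -/
def SiterN (sys : NAIFS E) : ℕ → ℕ → Set E → Set E
  | _, 0, B => B
  | k, n + 1, B => Sstep sys k (SiterN sys (k + 1) n B)

/-- Hausdorff semi-distance `ρ_H(A,B) = sup_{x ∈ A} inf_{y ∈ B} d(x,y)`. -/
noncomputable def semidist (A B : Set E) : ℝ≥0∞ :=
  ⨆ x ∈ A, EMetric.infEdist x B

/-- `{F^k}` is a pullback attractor: each `F^k` compact, uniformly bounded,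
invariant `F^k = S^k(F^{k+1})`, and `ρ_H(S^{k,l}(B), F^k) → 0` as `l → ∞`
for every bounded `B`. -/
def IsPullbackAttractor (sys : NAIFS E) (F : ℕ → Set E) : Prop :=
  (∀ k, IsCompact (F k)) ∧
  IsBounded (⋃ k, F k) ∧
  (∀ k, F k = Sstep sys k (F (k + 1))) ∧
  (∀ B : Set E, IsBounded B → ∀ k,
    Tendsto (fun l => semidist (SiterN sys k (l - k) B) (F k)) atTop (nhds 0))

/-- The generalised Moran open-set condition: uniformly bounded nonempty open
sets `U^k` with `S^k(U^{k+1}) ⊆ U^k`, `f_i(U^k) ∩ f_j(U^k) = ∅` for distinct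
`i, j ∈ I_k`, and `λ(U^k) ≥ ε₀ > 0`. -/
def GenMoranOSC {d : ℕ} (sys : NAIFS (EuclideanSpace ℝ (Fin d)))
    (U : ℕ → Set (EuclideanSpace ℝ (Fin d))) (ε₀ : ℝ) : Prop :=
  (∀ k, (U k).Nonempty) ∧
  (∀ k, IsOpen (U k)) ∧
  IsBounded (⋃ k, U k) ∧
  (∀ k, Sstep sys k (U (k + 1)) ⊆ U k) ∧
  (∀ k, 1 ≤ k → ∀ i ∈ sys.I k, ∀ j ∈ sys.I k, i ≠ j →
    sys.f i '' U k ∩ sys.f j '' U k = ∅) ∧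
  0 < ε₀ ∧
  (∀ k, ENNReal.ofReal ε₀ ≤ volume (U k))

/-- `wordSet sys k n` is `J^{k,k+n} = I_{k+1} × ⋯ × I_{k+n}`, as a finite set
of words (lists). -/
def wordSet (sys : NAIFS E) : ℕ → ℕ → Finset (List ℕ)
  | _, 0 => {([] : List ℕ)}
  | k, n + 1 => Finset.image (fun p : ℕ × List ℕ => p.1 :: p.2)
      (sys.I (k + 1) ×ˢ wordSet sys (k + 1) n)

/-- `σ_α = σ_{i_1} ⋯ σ_{i_n}` for a word `α = (i_1, …, i_n)`. -/
noncomputable def sigmaWord (sys : NAIFS E) (α : List ℕ) : ℝ :=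
  (α.map sys.σ).prod

/-- `f_α = f_{i_1} ∘ ⋯ ∘ f_{i_n}` for a word `α = (i_1, …, i_n)`. -/
def mapWord (sys : NAIFS E) (α : List ℕ) : E → E :=
  α.foldr (fun i g => sys.f i ∘ g) id

/-- `J^k_δ = {α ∈ J^k : σ_α η < δ ≤ σ_{α'} η}`, where `α'` is the truncation
of `α` (with `σ_{α'} = 1` when `α` has length 1). -/
def Jset (sys : NAIFS E) (η : ℝ) (k : ℕ) (δ : ℝ) : Set (List ℕ) :=
  {α | (∃ n : ℕ, 1 ≤ n ∧ α ∈ wordSet sys k n) ∧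
    sigmaWord sys α * η < δ ∧ δ ≤ sigmaWord sys α.dropLast * η}


namespace NAIFSaux

variable (sys : NAIFS E)

lemma sigmaWord_nil : sigmaWord sys [] = 1 := rfl

lemma sigmaWord_cons (i : ℕ) (α : List ℕ) :
    sigmaWord sys (i :: α) = sys.σ i * sigmaWord sys α := by
  simp [sigmaWord]

lemma sigmaWord_append (α β : List ℕ) :
    sigmaWord sys (α ++ β) = sigmaWord sys α * sigmaWord sys β := by
  simp [sigmaWord]

lemma sigmaWord_pos (α : List ℕ) : 0 < sigmaWord sys α := by
  induction α with
  | nil => norm_num [sigmaWord_nil]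
  | cons i l ih => rw [sigmaWord_cons]; exact mul_pos (sys.σ_pos i) ih

lemma sigmaWord_le_one (α : List ℕ) : sigmaWord sys α ≤ 1 := by
  induction α with
  | nil => simp [sigmaWord_nil]
  | cons i l ih =>
    rw [sigmaWord_cons]
    nlinarith [sys.σ_pos i, sys.σ_lt_one i, sigmaWord_pos sys l]

lemma mem_wordSet_succ {k n : ℕ} {α : List ℕ} :
    α ∈ wordSet sys k (n + 1) ↔
      ∃ i ∈ sys.I (k + 1), ∃ β ∈ wordSet sys (k + 1) n, α = i :: β := by
  constructor
  · intro h
    rw [wordSet, Finset.mem_image] at h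
    obtain ⟨p, hp, hpe⟩ := h
    rw [Finset.mem_product] at hp
    exact ⟨p.1, hp.1, p.2, hp.2, hpe.symm⟩
  · rintro ⟨i, hi, β, hβ, rfl⟩
    rw [wordSet, Finset.mem_image]
    exact ⟨(i, β), Finset.mem_product.2 ⟨hi, hβ⟩, rfl⟩

lemma mem_wordSet_length {k n : ℕ} {α : List ℕ} (h : α ∈ wordSet sys k n) :
    α.length = n := by
  induction n generalizing k α with
  | zero => rw [wordSet, Finset.mem_singleton] at h; simp [h]
  | succ n ih =>
    obtain ⟨i, _, β, hβ, rfl⟩ := (mem_wordSet_succ sys).1 h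
    simp [ih hβ]

lemma wordSet_take_drop {m : ℕ} : ∀ {k n : ℕ} {α : List ℕ},
    α ∈ wordSet sys k n → m ≤ n →
    α.take m ∈ wordSet sys k m ∧ α.drop m ∈ wordSet sys (k + m) (n - m) := by
  induction m with
  | zero =>
    intro k n α h _
    simpa [wordSet] using h
  | succ m ih =>
    intro k n α h hm
    obtain ⟨n', rfl⟩ : ∃ n', n = n' + 1 := ⟨n - 1, by omega⟩
    obtain ⟨i, hi, β, hβ, rfl⟩ := (mem_wordSet_succ sys).1 h
    obtain ⟨h1, h2⟩ := ih hβ (by omega)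
    constructor
    · exact (mem_wordSet_succ sys).2 ⟨i, hi, β.take m, h1, rfl⟩
    · have e1 : k + 1 + m = k + (m + 1) := by omega
      have e2 : n' - m = n' + 1 - (m + 1) := by omega
      rw [e1, e2] at h2
      simpa using h2

lemma wordSet_append {r : ℕ} : ∀ {m k : ℕ} {α β : List ℕ},
    α ∈ wordSet sys k m → β ∈ wordSet sys (k + m) r →
    α ++ β ∈ wordSet sys k (m + r) := by
  intro m
  induction m with
  | zero =>
    intro k α β hα hβ
    rw [wordSet, Finset.mem_singleton] at hα
    subst hα
    simpa using hβ
  | succ m ih =>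
    intro k α β hα hβ
    obtain ⟨i, hi, α₁, hα₁, rfl⟩ := (mem_wordSet_succ sys).1 hα
    have e1 : k + (m + 1) = k + 1 + m := by omega
    rw [e1] at hβ
    have := ih hα₁ hβ
    have e2 : m + 1 + r = (m + r) + 1 := by omega
    rw [e2]
    exact (mem_wordSet_succ sys).2 ⟨i, hi, α₁ ++ β, this, rfl⟩

variable {s : ℝ}

lemma sum_wordSet (hs : 0 < s)
    (hsum : ∀ k, 1 ≤ k → ∑ i ∈ sys.I k, sys.σ i ^ s = 1) :
    ∀ (n k : ℕ), ∑ α ∈ wordSet sys k n, sigmaWord sys α ^ s = 1 := by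
  intro n
  induction n with
  | zero => intro k; simp [wordSet, sigmaWord_nil]
  | succ n ih =>
    intro k
    rw [wordSet]
    rw [Finset.sum_image (by rintro ⟨a, b⟩ - ⟨c, d⟩ - h; simpa using h)]
    rw [Finset.sum_product]
    have : ∀ i ∈ sys.I (k+1), ∑ β ∈ wordSet sys (k+1) n,
        sigmaWord sys (i :: β) ^ s = sys.σ i ^ s := by
      intro i _
      have : ∀ β ∈ wordSet sys (k+1) n,
          sigmaWord sys (i :: β) ^ s = sys.σ i ^ s * sigmaWord sys β ^ s := by
        intro β _
        rw [sigmaWord_cons, Real.mul_rpow (sys.σ_pos i).le (sigmaWord_pos sys β).le]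
      rw [Finset.sum_congr rfl this, ← Finset.mul_sum, ih, mul_one]
    rw [Finset.sum_congr rfl this, hsum (k+1) (by omega)]

lemma sum_descend (hs : 0 < s)
    (hsum : ∀ k, 1 ≤ k → ∑ i ∈ sys.I k, sys.σ i ^ s = 1)
    {k m : ℕ} (r : ℕ) {α : List ℕ} (hα : α ∈ wordSet sys k m) :
    ∑ γ ∈ (wordSet sys k (m + r)).filter (fun γ => α <+: γ),
      sigmaWord sys γ ^ s = sigmaWord sys α ^ s := by
  classical
  have hlen := mem_wordSet_length sys hα
  have himg : (wordSet sys k (m + r)).filter (fun γ => α <+: γ) =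
      Finset.image (fun β => α ++ β) (wordSet sys (k + m) r) := by
    ext γ
    rw [Finset.mem_filter, Finset.mem_image]
    constructor
    · rintro ⟨hγ, hpre⟩
      have htake : γ.take m = α := by
        have := List.prefix_iff_eq_take.1 hpre
        rw [hlen] at this
        exact this.symm
      refine ⟨γ.drop m, ?_, by rw [← htake, List.take_append_drop]⟩
      have := (wordSet_take_drop sys hγ (Nat.le_add_right m r)).2
      simpa using this
    · rintro ⟨β, hβ, rfl⟩
      exact ⟨wordSet_append sys hα hβ, List.prefix_append α β⟩
  rw [himg, Finset.sum_image (by intro a _ b _ h; exact List.append_cancel_left h)]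
  have : ∀ β ∈ wordSet sys (k + m) r, sigmaWord sys (α ++ β) ^ s =
      sigmaWord sys α ^ s * sigmaWord sys β ^ s := by
    intro β _
    rw [sigmaWord_append,
      Real.mul_rpow (sigmaWord_pos sys α).le (sigmaWord_pos sys β).le]
  rw [Finset.sum_congr rfl this, ← Finset.mul_sum, sum_wordSet sys hs hsum, mul_one]

lemma sigmaWord_rpow_le_pow (hs : 0 < s) {c : ℝ} (hc : 0 ≤ c)
    (hσc : ∀ k, 1 ≤ k → ∀ i ∈ sys.I k, sys.σ i ^ s ≤ c) :
    ∀ {n k : ℕ} {α : List ℕ}, α ∈ wordSet sys k n →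
      sigmaWord sys α ^ s ≤ c ^ n := by
  intro n
  induction n with
  | zero =>
    intro k α h
    rw [wordSet, Finset.mem_singleton] at h
    simp [h, sigmaWord_nil]
  | succ n ih =>
    intro k α h
    obtain ⟨i, hi, β, hβ, rfl⟩ := (mem_wordSet_succ sys).1 h
    rw [sigmaWord_cons, Real.mul_rpow (sys.σ_pos i).le (sigmaWord_pos sys β).le,
      pow_succ]
    have h1 := hσc (k+1) (by omega) i hi
    have h2 := ih hβ
    have := Real.rpow_nonneg (sigmaWord_pos sys β).le s
    nlinarith [Real.rpow_nonneg (sys.σ_pos i).le s, pow_nonneg hc n]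

end NAIFSaux


/-- For the pullback attractor of a non-autonomous IFS of
similarities satisfying the generalised Moran open-set condition, with
`inf{σ_i} = σ* > 0` and `∑_{i∈I_k} σ_i^s = 1` for all `k`, there are constants
`κ₁, κ₂ > 0`, independent of `k` and `δ`, with
`κ₁ δ^{-s} ≤ card(J^k_δ) ≤ κ₂ δ^{-s}` for all `k ∈ ℕ₀` and `0 < δ ≤ η`. -/
theorem card_J_delta_bounds {d : ℕ}
    (sys : NAIFS (EuclideanSpace ℝ (Fin d)))
    (hsim : ∀ i x y, dist (sys.f i x) (sys.f i y) = sys.σ i * dist x y)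
    (U : ℕ → Set (EuclideanSpace ℝ (Fin d))) (ε₀ : ℝ)
    (hosc : GenMoranOSC sys U ε₀)
    (σstar : ℝ) (hσstar : σstar = sInf (Set.range sys.σ)) (hσpos : 0 < σstar)
    (s : ℝ) (hs : 0 < s)
    (hsum : ∀ k, 1 ≤ k → ∑ i ∈ sys.I k, sys.σ i ^ s = 1)
    (F : ℕ → Set (EuclideanSpace ℝ (Fin d)))
    (hF : IsPullbackAttractor sys F)
    (η : ℝ) (hη : η = ⨆ k, diam (closure (U k))) :
    ∃ κ₁ κ₂ : ℝ, 0 < κ₁ ∧ 0 < κ₂ ∧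
      ∀ (k : ℕ) (δ : ℝ), 0 < δ → δ ≤ η →
        (Jset sys η k δ).Finite ∧
        κ₁ * δ ^ (-s) ≤ ((Jset sys η k δ).ncard : ℝ) ∧
        ((Jset sys η k δ).ncard : ℝ) ≤ κ₂ * δ ^ (-s) := by
  classical
  open NAIFSaux in
  by_cases hη0 : 0 < η
  swap
  · refine ⟨1, 1, one_pos, one_pos, fun k δ hδ hδη => absurd (hδ.trans_le hδη) hη0⟩
  -- basic facts about σstar
  have hσle : ∀ i, σstar ≤ sys.σ i := by
    intro i
    rw [hσstar]
    exact csInf_le ⟨0, by rintro x ⟨j, rfl⟩; exact (sys.σ_pos j).le⟩ ⟨i, rfl⟩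
  have hσlt1 : σstar < 1 := lt_of_le_of_lt (hσle 0) (sys.σ_lt_one 0)
  set R := σstar ^ s with hR
  have hRpos : 0 < R := Real.rpow_pos_of_pos hσpos s
  have hRlt1 : R < 1 := Real.rpow_lt_one hσpos.le hσlt1 hs
  set c := 1 - R with hc
  have hc0 : 0 ≤ c := by simp [hc]; linarith
  have hc1 : c < 1 := by simp [hc]; linarith
  have hσc : ∀ k, 1 ≤ k → ∀ i ∈ sys.I k, sys.σ i ^ s ≤ c := by
    intro k hk i hi
    have hσis : sys.σ i ^ s < 1 :=
      Real.rpow_lt_one (sys.σ_pos i).le (sys.σ_lt_one i) hs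
    have hj : ∃ j ∈ sys.I k, j ≠ i := by
      by_contra h
      push_neg at h
      have hsub : sys.I k ⊆ {i} := fun j hj => Finset.mem_singleton.2 (h j hj)
      have hle : ∑ l ∈ sys.I k, sys.σ l ^ s ≤ ∑ l ∈ ({i} : Finset ℕ), sys.σ l ^ s :=
        Finset.sum_le_sum_of_subset_of_nonneg hsub
          (fun l _ _ => Real.rpow_nonneg (sys.σ_pos l).le s)
      rw [hsum k hk, Finset.sum_singleton] at hle
      linarith
    obtain ⟨j, hjI, hji⟩ := hj
    have hpair : ({i, j} : Finset ℕ) ⊆ sys.I k := by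
      intro l hl
      rcases Finset.mem_insert.1 hl with rfl | hl
      · exact hi
      · rw [Finset.mem_singleton] at hl; subst hl; exact hjI
    have hle : ∑ l ∈ ({i, j} : Finset ℕ), sys.σ l ^ s ≤ ∑ l ∈ sys.I k, sys.σ l ^ s :=
      Finset.sum_le_sum_of_subset_of_nonneg hpair
        (fun l _ _ => Real.rpow_nonneg (sys.σ_pos l).le s)
    rw [Finset.sum_insert (by simpa using hji.symm), Finset.sum_singleton,
      hsum k hk] at hle
    have : R ≤ sys.σ j ^ s := Real.rpow_le_rpow hσpos.le (hσle j) hs.le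
    simp only [hc]
    linarith
  refine ⟨η ^ s, η ^ s * σstar ^ (-s), Real.rpow_pos_of_pos hη0 s,
    mul_pos (Real.rpow_pos_of_pos hη0 s) (Real.rpow_pos_of_pos hσpos (-s)), ?_⟩
  intro k δ hδ hδη
  set t := δ / η with htdef
  have ht0 : 0 < t := div_pos hδ hη0
  have hts : 0 < t ^ s := Real.rpow_pos_of_pos ht0 s
  obtain ⟨N₀, hN₀⟩ := exists_pow_lt_of_lt_one hts hc1
  set N := max N₀ 1 with hNdef
  have hN1 : 1 ≤ N := le_max_right _ _
  have hcN : c ^ N < t ^ s :=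
    lt_of_le_of_lt (pow_le_pow_of_le_one hc0 hc1.le (le_max_left _ _)) hN₀
  set P : List ℕ → Prop :=
    fun α => sigmaWord sys α * η < δ ∧ δ ≤ sigmaWord sys α.dropLast * η with hPdef
  set Jfin := (Finset.Icc 1 N).biUnion
    (fun m => (wordSet sys k m).filter P) with hJfindef
  have hJfin_mem : ∀ α, α ∈ Jfin ↔
      (∃ m, 1 ≤ m ∧ m ≤ N ∧ α ∈ wordSet sys k m) ∧ P α := by
    intro α
    simp only [hJfindef, Finset.mem_biUnion, Finset.mem_Icc, Finset.mem_filter]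
    constructor
    · rintro ⟨m, ⟨h1, h2⟩, h3, h4⟩; exact ⟨⟨m, h1, h2, h3⟩, h4⟩
    · rintro ⟨⟨m, h1, h2, h3⟩, h4⟩; exact ⟨m, ⟨h1, h2⟩, h3, h4⟩
  -- words satisfying the second J-condition have length ≤ N
  have hlenbd : ∀ n (α : List ℕ), 1 ≤ n → α ∈ wordSet sys k n →
      δ ≤ sigmaWord sys α.dropLast * η → n ≤ N := by
    intro n α hn hα hδle
    by_contra h
    push_neg at h
    have hlα : α.length = n := mem_wordSet_length sys hα
    have hdrop : α.dropLast ∈ wordSet sys k (n - 1) := by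
      have h0 := (wordSet_take_drop (m := n - 1) sys hα (Nat.sub_le n 1)).1
      have he : α.take (n - 1) = α.dropLast := by
        rw [List.dropLast_eq_take, hlα]
      rwa [he] at h0
    have h1 : sigmaWord sys α.dropLast ^ s ≤ c ^ (n - 1) :=
      sigmaWord_rpow_le_pow sys hs hc0 hσc hdrop
    have h2 : c ^ (n - 1) ≤ c ^ N := pow_le_pow_of_le_one hc0 hc1.le (by omega)
    have h3 : t ≤ sigmaWord sys α.dropLast := (div_le_iff₀ hη0).2 hδle
    have h4 : t ^ s ≤ sigmaWord sys α.dropLast ^ s :=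
      Real.rpow_le_rpow ht0.le h3 hs.le
    linarith
  have hJset_eq : Jset sys η k δ = ↑Jfin := by
    ext α
    simp only [Jset, Set.mem_setOf_eq, Finset.mem_coe, hJfin_mem]
    constructor
    · rintro ⟨⟨n, hn1, hn⟩, h2, h3⟩
      exact ⟨⟨n, hn1, hlenbd n α hn1 hn h3, hn⟩, h2, h3⟩
    · rintro ⟨⟨m, hm1, _, hm⟩, hP⟩
      exact ⟨⟨m, hm1, hm⟩, hP⟩
  -- Jfin is an antichain w.r.t. prefix order
  have hanti : ∀ α ∈ Jfin, ∀ β ∈ Jfin, α <+: β → α = β := by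
    intro α hα β hβ hpre
    rw [hJfin_mem] at hα hβ
    obtain ⟨⟨m, hm1, hmN, hαw⟩, hPα⟩ := hα
    obtain ⟨⟨n, hn1, hnN, hβw⟩, hPβ⟩ := hβ
    have hlα : α.length = m := mem_wordSet_length sys hαw
    have hlβ : β.length = n := mem_wordSet_length sys hβw
    by_contra hne
    have hmlen : m ≤ n := by
      have := hpre.length_le; omega
    have hmn : m < n := by
      rcases eq_or_lt_of_le hmlen with h | h
      · exact absurd (hpre.eq_of_length (by omega)) hne
      · exact h
    have hpre' : α <+: β.dropLast := by
      have h1 : α = (β.dropLast).take m := by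
        rw [List.dropLast_eq_take, hlβ, List.take_take,
          min_eq_left (by omega)]
        have := List.prefix_iff_eq_take.1 hpre
        rwa [hlα] at this
      rw [h1]
      exact List.take_prefix m β.dropLast
    obtain ⟨rest, hrest⟩ := hpre'
    have hle : sigmaWord sys β.dropLast ≤ sigmaWord sys α := by
      rw [← hrest, sigmaWord_append]
      nlinarith [sigmaWord_pos sys α, sigmaWord_le_one sys rest,
        sigmaWord_pos sys rest]
    have h1 := hPα.1
    have h2 := hPβ.2
    nlinarith [hη0]
  set D : List ℕ → Finset (List ℕ) :=
    fun α => (wordSet sys k N).filter (fun γ => α <+: γ) with hDdef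
  have hDmem : ∀ α γ, γ ∈ D α ↔ γ ∈ wordSet sys k N ∧ α <+: γ := by
    intro α γ; simp [hDdef]
  have hDdisj : (↑Jfin : Set (List ℕ)).PairwiseDisjoint D := by
    intro α hα β hβ hne
    rw [Function.onFun, Finset.disjoint_left]
    intro γ hγα hγβ
    rw [hDmem] at hγα hγβ
    rw [Finset.mem_coe] at hα hβ
    rcases List.prefix_or_prefix_of_prefix hγα.2 hγβ.2 with h | h
    · exact hne (hanti α hα β hβ h)
    · exact hne ((hanti β hβ α hα h).symm)
  have hDsum : ∀ α ∈ Jfin, ∑ γ ∈ D α, sigmaWord sys γ ^ s = sigmaWord sys α ^ s := by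
    intro α hα
    rw [hJfin_mem] at hα
    obtain ⟨⟨m, hm1, hmN, hαw⟩, _⟩ := hα
    have := sum_descend sys hs hsum (N - m) hαw
    rwa [Nat.add_sub_cancel' hmN] at this
  have hBsub : Jfin.biUnion D ⊆ wordSet sys k N := by
    intro γ hγ
    rw [Finset.mem_biUnion] at hγ
    obtain ⟨α, _, hγ⟩ := hγ
    exact ((hDmem α γ).1 hγ).1
  have hsubB : wordSet sys k N ⊆ Jfin.biUnion D := by
    intro γ hγ
    have hlγ : γ.length = N := mem_wordSet_length sys hγ
    have hPN : sigmaWord sys (γ.take N) * η < δ := by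
      have h1 : sigmaWord sys γ ^ s ≤ c ^ N :=
        sigmaWord_rpow_le_pow sys hs hc0 hσc hγ
      have h2 : sigmaWord sys γ ^ s < t ^ s := lt_of_le_of_lt h1 hcN
      have h3 : sigmaWord sys γ < t := by
        by_contra hcon
        push_neg at hcon
        exact absurd (Real.rpow_le_rpow ht0.le hcon hs.le) (not_le.2 h2)
      rw [List.take_of_length_le (by omega)]
      exact (lt_div_iff₀ hη0).1 h3
    have hPex : ∃ m, sigmaWord sys (γ.take m) * η < δ := ⟨N, hPN⟩
    set m := Nat.find hPex with hmdef
    have hmspec : sigmaWord sys (γ.take m) * η < δ := Nat.find_spec hPex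
    have hmN : m ≤ N := Nat.find_min' hPex hPN
    have hm1 : 1 ≤ m := by
      by_contra h
      push_neg at h
      interval_cases m
      · simp only [List.take_zero, sigmaWord_nil, one_mul] at hmspec
        linarith
    have hprev : δ ≤ sigmaWord sys (γ.take (m - 1)) * η := by
      have := Nat.find_min hPex (m := m - 1) (by omega)
      push_neg at this
      exact this
    set β := γ.take m with hβdef
    have hβw : β ∈ wordSet sys k m :=
      (wordSet_take_drop (m := m) sys hγ (by omega)).1
    have hdropβ : β.dropLast = γ.take (m - 1) := by
      have hlβ : β.length = m := mem_wordSet_length sys hβw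
      rw [List.dropLast_eq_take, hlβ, hβdef, List.take_take,
        min_eq_left (by omega)]
    have hβJ : β ∈ Jfin := (hJfin_mem β).2
      ⟨⟨m, hm1, hmN, hβw⟩, hmspec, by rw [hdropβ]; exact hprev⟩
    rw [Finset.mem_biUnion]
    exact ⟨β, hβJ, (hDmem β γ).2 ⟨hγ, List.take_prefix m γ⟩⟩
  have hBeq : Jfin.biUnion D = wordSet sys k N :=
    Finset.Subset.antisymm hBsub hsubB
  have hsum1 : ∑ β ∈ Jfin, sigmaWord sys β ^ s = 1 := by
    rw [← Finset.sum_congr rfl hDsum, ← Finset.sum_biUnion hDdisj, hBeq,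
      sum_wordSet sys hs hsum]
  have hub : ∀ β ∈ Jfin, sigmaWord sys β ^ s ≤ t ^ s := by
    intro β hβ
    rw [hJfin_mem] at hβ
    have h1 : sigmaWord sys β ≤ t := by
      rw [htdef, le_div_iff₀ hη0]
      exact hβ.2.1.le
    exact Real.rpow_le_rpow (sigmaWord_pos sys β).le h1 hs.le
  have hlbv : ∀ β ∈ Jfin, R * t ^ s ≤ sigmaWord sys β ^ s := by
    intro β hβ
    rw [hJfin_mem] at hβ
    obtain ⟨⟨m, hm1, hmN, hβw⟩, hPβ⟩ := hβ
    have hβne : β ≠ [] := by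
      have := mem_wordSet_length sys hβw
      intro h; rw [h] at this; simp at this; omega
    have hsplit : sigmaWord sys β =
        sigmaWord sys β.dropLast * sys.σ (β.getLast hβne) := by
      conv_lhs => rw [← List.dropLast_append_getLast hβne]
      rw [sigmaWord_append, sigmaWord_cons, sigmaWord_nil, mul_one]
    have h1 : t ≤ sigmaWord sys β.dropLast := (div_le_iff₀ hη0).2 hPβ.2
    have h2 : σstar * t ≤ sigmaWord sys β := by
      rw [hsplit]
      have := hσle (β.getLast hβne)
      nlinarith [sigmaWord_pos sys β.dropLast, hσpos, ht0]
    calc R * t ^ s = (σstar * t) ^ s := by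
          rw [Real.mul_rpow hσpos.le ht0.le]
      _ ≤ sigmaWord sys β ^ s :=
          Real.rpow_le_rpow (by positivity) h2 hs.le
  have hPp : 0 < δ ^ s := Real.rpow_pos_of_pos hδ s
  have hQp : 0 < η ^ s := Real.rpow_pos_of_pos hη0 s
  have hts_eq : t ^ s = δ ^ s / η ^ s := Real.div_rpow hδ.le hη0.le s
  have hcard1 : (Jfin.card : ℝ) * (R * t ^ s) ≤ 1 := by
    have := Finset.card_nsmul_le_sum Jfin _ _ hlbv
    rw [nsmul_eq_mul] at this
    linarith [hsum1 ▸ this]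
  have hcard2 : 1 ≤ (Jfin.card : ℝ) * t ^ s := by
    have := Finset.sum_le_card_nsmul Jfin _ _ hub
    rw [nsmul_eq_mul] at this
    linarith [hsum1 ▸ this]
  refine ⟨by rw [hJset_eq]; exact Jfin.finite_toSet, ?_, ?_⟩
  · rw [hJset_eq, Set.ncard_coe_finset, Real.rpow_neg hδ.le,
      ← div_eq_mul_inv, div_le_iff₀ hPp]
    rw [hts_eq] at hcard2
    have h := mul_le_mul_of_nonneg_right hcard2 hQp.le
    rw [one_mul, mul_assoc, div_mul_cancel₀ _ (ne_of_gt hQp)] at h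
    exact h
  · rw [hJset_eq, Set.ncard_coe_finset, Real.rpow_neg hδ.le,
      Real.rpow_neg hσpos.le]
    rw [hts_eq] at hcard1
    have key : (Jfin.card : ℝ) * (R * δ ^ s) ≤ η ^ s := by
      have h := mul_le_mul_of_nonneg_right hcard1 hQp.le
      rw [one_mul] at h
      have e : (Jfin.card : ℝ) * (R * (δ ^ s / η ^ s)) * η ^ s =
          (Jfin.card : ℝ) * (R * δ ^ s) := by
        rw [mul_assoc, mul_assoc, div_mul_cancel₀ _ (ne_of_gt hQp)]
      rwa [e] at h
    have hgoal_eq : η ^ s * (σstar ^ s)⁻¹ * (δ ^ s)⁻¹ =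
        η ^ s / (R * δ ^ s) := by
      rw [hR, div_eq_mul_inv, mul_inv]
      ring
    rw [hgoal_eq, le_div_iff₀ (mul_pos hRpos hPp)]
    exact key
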